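/- With notation as above (A bounded positive, b ≥ 2, ϱ the Chernoff rate function, p = inf_{t∈[0,1]} E[A^t], q = sup_{r∈[r̲,r̄]} r·ϱ(r)), if p ≥ 1/b then q ≥ p. In particular p > 1/b implies q > 1/b, and p = 1/b implies q = 1/b. -/

import Mathlib

open MeasureTheory Real
open scoped NNReal ENNReal

section aux
variable {Ω : Type*} [MeasurableSpace Ω] {μ : Measure Ω} [IsProbabilityMeasure μ]
  {A : Ω → ℝ} {ε₀ Θ : ℝ}

lemma aux_meas (hA : Measurable A) (hApos : ∀ ω, 0 < A ω) (t : ℝ) :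
    Measurable fun ω => A ω ^ t := by
  have : (fun ω => A ω ^ t) = fun ω => Real.exp (Real.log (A ω) * t) :=
    funext fun ω => Real.rpow_def_of_pos (hApos ω) t
  rw [this]
  exact Real.measurable_exp.comp ((Real.measurable_log.comp hA).mul_const t)

lemma aux_int (hA : Measurable A) (hε : 0 < ε₀) (hbd : ∀ ω, ε₀ ≤ A ω ∧ A ω ≤ Θ) (t : ℝ) :
    Integrable (fun ω => A ω ^ t) μ := by
  have hApos : ∀ ω, 0 < A ω := fun ω => lt_of_lt_of_le hε (hbd ω).1
  refine (integrable_const (max (ε₀ ^ t) (Θ ^ t))).mono'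
    (aux_meas hA hApos t).aestronglyMeasurable (ae_of_all _ fun ω => ?_)
  have h0 : 0 ≤ A ω ^ t := (Real.rpow_pos_of_pos (hApos ω) t).le
  rw [Real.norm_eq_abs, abs_of_nonneg h0]
  rcases le_or_gt 0 t with ht | ht
  · exact le_max_of_le_right (Real.rpow_le_rpow (hApos ω).le (hbd ω).2 ht)
  · exact le_max_of_le_left (Real.rpow_le_rpow_of_nonpos hε (hbd ω).1 ht.le)

lemma aux_lb (hA : Measurable A) (hε : 0 < ε₀) (hbd : ∀ ω, ε₀ ≤ A ω ∧ A ω ≤ Θ)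
    {t : ℝ} (ht : 0 ≤ t) : ε₀ ^ t ≤ ∫ ω, A ω ^ t ∂μ := by
  have := integral_mono (μ := μ) (g := fun ω => A ω ^ t) (integrable_const (ε₀ ^ t))
    (aux_int hA hε hbd t) (fun ω => Real.rpow_le_rpow hε.le (hbd ω).1 ht)
  simpa using this

lemma aux_ub (hA : Measurable A) (hε : 0 < ε₀) (hbd : ∀ ω, ε₀ ≤ A ω ∧ A ω ≤ Θ)
    {t : ℝ} (ht : 0 ≤ t) : (∫ ω, A ω ^ t ∂μ) ≤ Θ ^ t := by
  have := integral_mono (μ := μ) (f := fun ω => A ω ^ t) (aux_int hA hε hbd t)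
    (integrable_const (Θ ^ t)) (fun ω => Real.rpow_le_rpow (hε.le.trans (hbd ω).1) (hbd ω).2 ht)
  simpa using this

lemma aux_logint (hA : Measurable A) (hε : 0 < ε₀) (hbd : ∀ ω, ε₀ ≤ A ω ∧ A ω ≤ Θ) :
    Integrable (fun ω => Real.log (A ω)) μ := by
  refine (integrable_const (max |Real.log ε₀| |Real.log Θ|)).mono'
    ((Real.measurable_log.comp hA).aestronglyMeasurable) (ae_of_all _ fun ω => ?_)
  have hApos : 0 < A ω := lt_of_lt_of_le hε (hbd ω).1
  rw [Real.norm_eq_abs, abs_le]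
  constructor
  · have h1 : Real.log ε₀ ≤ Real.log (A ω) := Real.log_le_log hε (hbd ω).1
    have h2 : -|Real.log ε₀| ≤ Real.log ε₀ := neg_abs_le _
    exact le_trans (by simpa using neg_le_neg (le_max_left |Real.log ε₀| |Real.log Θ|))
      (h2.trans h1)
  · have h1 : Real.log (A ω) ≤ Real.log Θ := Real.log_le_log hApos (hbd ω).2
    exact h1.trans ((le_abs_self _).trans (le_max_right _ _))

lemma aux_jensen (hA : Measurable A) (hε : 0 < ε₀) (hbd : ∀ ω, ε₀ ≤ A ω ∧ A ω ≤ Θ)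
    (t : ℝ) : Real.exp (∫ ω, Real.log (A ω) ∂μ) ^ t ≤ ∫ ω, A ω ^ t ∂μ := by
  have hApos : ∀ ω, 0 < A ω := fun ω => lt_of_lt_of_le hε (hbd ω).1
  have hfun : (fun ω => Real.exp (Real.log (A ω) * t)) = fun ω => A ω ^ t :=
    funext fun ω => (Real.rpow_def_of_pos (hApos ω) t).symm
  have hint1 : Integrable (fun ω => Real.log (A ω) * t) μ :=
    (aux_logint hA hε hbd).mul_const t
  have hint2 : Integrable (fun ω => Real.exp (Real.log (A ω) * t)) μ := by
    rw [hfun]; exact aux_int hA hε hbd t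
  have hj := convexOn_exp.map_integral_le (μ := μ)
    Real.continuous_exp.continuousOn isClosed_univ
    (ae_of_all _ fun ω => Set.mem_univ _) hint1 (by exact hint2)
  rw [Real.rpow_def_of_pos (Real.exp_pos _), Real.log_exp]
  calc Real.exp ((∫ ω, Real.log (A ω) ∂μ) * t)
      = Real.exp (∫ ω, Real.log (A ω) * t ∂μ) := by rw [integral_mul_const]
    _ ≤ ∫ ω, Real.exp (Real.log (A ω) * t) ∂μ := hj
    _ = ∫ ω, A ω ^ t ∂μ := by rw [hfun]

end aux

section holder
variable {Ω : Type*} [MeasurableSpace Ω] {μ : Measure Ω} [IsProbabilityMeasure μ]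
  {A : Ω → ℝ} {ε₀ Θ : ℝ}

lemma aux_meas' (hA : Measurable A) (hApos : ∀ ω, 0 < A ω) (t : ℝ) :
    Measurable fun ω => A ω ^ t := by
  have : (fun ω => A ω ^ t) = fun ω => Real.exp (Real.log (A ω) * t) :=
    funext fun ω => Real.rpow_def_of_pos (hApos ω) t
  rw [this]
  exact Real.measurable_exp.comp ((Real.measurable_log.comp hA).mul_const t)

lemma aux_holder (hA : Measurable A) (hε : 0 < ε₀) (hbd : ∀ ω, ε₀ ≤ A ω ∧ A ω ≤ Θ)
    (hint : ∀ t : ℝ, Integrable (fun ω => A ω ^ t) μ)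
    {a b l : ℝ} (ha : 0 ≤ a) (hb : 0 ≤ b) (hl0 : 0 < l) (hl1 : l < 1) :
    (∫ ω, A ω ^ (l * a + (1 - l) * b) ∂μ) ≤
      (∫ ω, A ω ^ a ∂μ) ^ l * (∫ ω, A ω ^ b ∂μ) ^ (1 - l) := by
  have hApos : ∀ ω, 0 < A ω := fun ω => lt_of_lt_of_le hε (hbd ω).1
  have hl1' : 0 < 1 - l := by linarith
  have hpq : Real.HolderConjugate (1 / l) (1 / (1 - l)) := by
    rw [Real.holderConjugate_iff]
    constructor
    · rw [lt_div_iff₀ hl0]; linarith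
    · simp only [one_div, inv_inv]; ring
  set F : Ω → ℝ≥0∞ := fun ω => ENNReal.ofReal (A ω ^ (l * a)) with hF
  set G : Ω → ℝ≥0∞ := fun ω => ENNReal.ofReal (A ω ^ ((1 - l) * b)) with hG
  have hFm : AEMeasurable F μ :=
    ((aux_meas' hA hApos (l * a)).ennreal_ofReal).aemeasurable
  have hGm : AEMeasurable G μ :=
    ((aux_meas' hA hApos ((1 - l) * b)).ennreal_ofReal).aemeasurable
  have key := ENNReal.lintegral_mul_le_Lp_mul_Lq μ hpq hFm hGm
  -- rewrite LHS
  have hFG : ∀ ω, (F * G) ω = ENNReal.ofReal (A ω ^ (l * a + (1 - l) * b)) := by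
    intro ω
    simp only [Pi.mul_apply, hF, hG]
    rw [← ENNReal.ofReal_mul (Real.rpow_pos_of_pos (hApos ω) _).le,
      ← Real.rpow_add (hApos ω)]
  have hFp : ∀ ω, F ω ^ (1 / l : ℝ) = ENNReal.ofReal (A ω ^ a) := by
    intro ω
    rw [hF, ENNReal.ofReal_rpow_of_pos (Real.rpow_pos_of_pos (hApos ω) _),
      ← Real.rpow_mul (hApos ω).le]
    congr 1
    field_simp
  have hGq : ∀ ω, G ω ^ (1 / (1 - l) : ℝ) = ENNReal.ofReal (A ω ^ b) := by
    intro ω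
    rw [hG, ENNReal.ofReal_rpow_of_pos (Real.rpow_pos_of_pos (hApos ω) _),
      ← Real.rpow_mul (hApos ω).le]
    congr 1
    field_simp
  have hnn : ∀ t : ℝ, (fun _ => (0:ℝ)) ≤ᵐ[μ] fun ω => A ω ^ t := fun t =>
    ae_of_all _ fun ω => by simpa using (Real.rpow_pos_of_pos (hApos ω) t).le
  have hofReal : ∀ t : ℝ, ∫⁻ ω, ENNReal.ofReal (A ω ^ t) ∂μ
      = ENNReal.ofReal (∫ ω, A ω ^ t ∂μ) := fun t =>
    (ofReal_integral_eq_lintegral_ofReal (hint t) (hnn t)).symm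
  rw [lintegral_congr hFG, hofReal] at key
  simp only [hFp, hGq] at key
  rw [hofReal, hofReal, one_div_one_div, one_div_one_div] at key
  have hpos : ∀ t : ℝ, 0 ≤ t → 0 < ∫ ω, A ω ^ t ∂μ := by
    intro t ht
    have hmono := integral_mono (μ := μ) (integrable_const (ε₀ ^ t)) (hint t)
      (fun ω => Real.rpow_le_rpow hε.le (hbd ω).1 ht)
    simp only [integral_const, measure_univ, probReal_univ, ENNReal.toReal_one, smul_eq_mul, one_mul] at hmono
    exact lt_of_lt_of_le (Real.rpow_pos_of_pos hε t) hmono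
  have hIa := hpos a ha
  have hIb := hpos b hb
  rw [ENNReal.ofReal_rpow_of_pos hIa, ENNReal.ofReal_rpow_of_pos hIb,
    ← ENNReal.ofReal_mul (Real.rpow_pos_of_pos hIa l).le] at key
  exact (ENNReal.ofReal_le_ofReal_iff
    (mul_nonneg (Real.rpow_pos_of_pos hIa l).le (Real.rpow_pos_of_pos hIb (1-l)).le)).mp key
end holder

set_option maxHeartbeats 1000000 in
theorem stmt13 {Ω : Type*} [MeasurableSpace Ω] (μ : Measure Ω) [IsProbabilityMeasure μ]
    (b : ℕ) (hb : 2 ≤ b) (ε₀ Θ : ℝ) (hε : 0 < ε₀) (hεΘ : ε₀ ≤ Θ)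
    (A : Ω → ℝ) (hA : Measurable A) (hbd : ∀ ω, ε₀ ≤ A ω ∧ A ω ≤ Θ)
    (ϱ : ℝ → ℝ)
    (hϱ : ∀ r : ℝ, ϱ r = ⨅ t : {t : ℝ // 0 ≤ t}, r ^ (-(t : ℝ)) * ∫ ω, A ω ^ (t : ℝ) ∂μ)
    (p : ℝ) (hp : p = ⨅ t : Set.Icc (0 : ℝ) 1, ∫ ω, A ω ^ (t : ℝ) ∂μ)
    (rlow : ℝ) (hrlow : rlow = Real.exp (∫ ω, Real.log (A ω) ∂μ))
    (rbar : ℝ) (hrbar : rbar = sInf {r : ℝ | 0 < r ∧ ϱ r ≤ 1 / b})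
    (q : ℝ) (hq : q = sSup ((fun r => r * ϱ r) '' Set.Icc rlow rbar)) :
    (1 / b ≤ p → p ≤ q) ∧ (1 / b < p → 1 / b < q) ∧ (p = 1 / b → q = 1 / b) := by
  have hApos : ∀ ω, 0 < A ω := fun ω => lt_of_lt_of_le hε (hbd ω).1
  have hΘ : 0 < Θ := lt_of_lt_of_le hε hεΘ
  have hb1 : (1:ℝ) < (b:ℝ) := by exact_mod_cast lt_of_lt_of_le one_lt_two hb
  have hbpos : (0:ℝ) < (b:ℝ) := lt_trans one_pos hb1
  have hbinv_pos : (0:ℝ) < 1 / b := by positivity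
  have hbinv_lt1 : (1:ℝ) / b < 1 := by
    rw [div_lt_one hbpos]; exact hb1
  have hint : ∀ t : ℝ, Integrable (fun ω => A ω ^ t) μ := aux_int hA hε hbd
  -- notation for moment integrals
  set I : ℝ → ℝ := fun t => ∫ ω, A ω ^ t ∂μ with hIdef
  have hI_pos : ∀ t : ℝ, 0 ≤ t → 0 < I t := fun t ht =>
    lt_of_lt_of_le (Real.rpow_pos_of_pos hε t) (aux_lb (μ := μ) hA hε hbd ht)
  have hI0 : I 0 = 1 := by
    simp only [hIdef, Real.rpow_zero]
    simp
  have hI1 : I 1 ≤ Θ := by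
    have h := aux_ub (μ := μ) hA hε hbd (zero_le_one (α := ℝ))
    rw [Real.rpow_one] at h
    exact h
  have hjensen : ∀ t : ℝ, rlow ^ t ≤ I t := by
    intro t; rw [hrlow]; exact aux_jensen (μ := μ) hA hε hbd t
  have hrlow_pos : 0 < rlow := hrlow ▸ Real.exp_pos _
  -- ϱ API
  have hϱ_le : ∀ r : ℝ, 0 < r → ∀ t : ℝ, 0 ≤ t → ϱ r ≤ r ^ (-t) * I t := by
    intro r hr t ht
    rw [hϱ]
    exact ciInf_le ⟨0, by
      rintro x ⟨⟨u, hu⟩, rfl⟩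
      exact mul_nonneg (Real.rpow_pos_of_pos hr _).le (hI_pos u hu).le⟩
      (⟨t, ht⟩ : {t : ℝ // 0 ≤ t})
  have hle_ϱ : ∀ r c : ℝ, (∀ t : ℝ, 0 ≤ t → c ≤ r ^ (-t) * I t) → c ≤ ϱ r := by
    intro r c h
    rw [hϱ]
    exact le_ciInf fun u => h u.1 u.2
  have hϱ_le_one : ∀ r : ℝ, 0 < r → ϱ r ≤ 1 := by
    intro r hr
    have h := hϱ_le r hr 0 le_rfl
    simpa [hI0] using h
  have hϱ_nonneg : ∀ r : ℝ, 0 < r → 0 ≤ ϱ r := fun r hr =>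
    hle_ϱ r 0 fun t ht => mul_nonneg (Real.rpow_pos_of_pos hr _).le (hI_pos t ht).le
  -- p API
  have hp_le : ∀ t : ℝ, 0 ≤ t → t ≤ 1 → p ≤ I t := by
    intro t h0 h1
    rw [hp]
    exact ciInf_le ⟨0, by
      rintro x ⟨⟨u, hu⟩, rfl⟩
      exact (hI_pos u hu.1).le⟩ (⟨t, h0, h1⟩ : Set.Icc (0:ℝ) 1)
  have hp_pos : 0 < p := by
    rw [hp]
    have hlow : ∀ t' : Set.Icc (0:ℝ) 1, min ε₀ 1 ≤ I t' := by
      rintro ⟨t, ht0, ht1⟩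
      refine le_trans ?_ (aux_lb (μ := μ) hA hε hbd ht0)
      rcases le_or_gt 1 ε₀ with h | h
      · exact le_trans (min_le_right _ _) (Real.one_le_rpow h ht0)
      · refine le_trans (min_le_left _ _) ?_
        have h2 := Real.rpow_le_rpow_of_exponent_ge hε h.le ht1
        rwa [Real.rpow_one] at h2
    exact lt_of_lt_of_le (lt_min hε one_pos) (le_ciInf hlow)
  have hp_le_one : p ≤ 1 := by
    have h := hp_le 0 le_rfl zero_le_one
    rwa [hI0] at h
  have hϱ_rlow : 1 ≤ ϱ rlow := by
    refine hle_ϱ rlow 1 fun t ht => ?_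
    have h1 : rlow ^ (-t) * rlow ^ t = 1 := by
      rw [← Real.rpow_add hrlow_pos]; simp
    calc (1:ℝ) = rlow ^ (-t) * rlow ^ t := h1.symm
      _ ≤ rlow ^ (-t) * I t :=
          mul_le_mul_of_nonneg_left (hjensen t) (Real.rpow_pos_of_pos hrlow_pos _).le
  -- the set S
  set S : Set ℝ := {r : ℝ | 0 < r ∧ ϱ r ≤ 1 / b} with hSdef
  have hSbdd : BddBelow S := ⟨0, fun r hr => hr.1.le⟩
  have hSmem : (b:ℝ) * Θ ∈ S := by
    have hbΘ : (0:ℝ) < (b:ℝ) * Θ := by positivity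
    refine ⟨hbΘ, ?_⟩
    have h := hϱ_le ((b:ℝ)*Θ) hbΘ 1 zero_le_one
    refine le_trans h ?_
    rw [Real.rpow_neg_one]
    calc ((b:ℝ)*Θ)⁻¹ * I 1 ≤ ((b:ℝ)*Θ)⁻¹ * Θ :=
          mul_le_mul_of_nonneg_left hI1 (by positivity)
      _ = 1 / b := by field_simp [mul_comm]
  have hSne : S.Nonempty := ⟨_, hSmem⟩
  have hS_lb : ∀ r ∈ S, rlow ≤ r := by
    intro r hr
    by_contra hlt
    push_neg at hlt
    have hrpos := hr.1
    have h1 : (1:ℝ) ≤ ϱ r := by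
      refine hle_ϱ r 1 fun t ht => ?_
      have h2 : r ^ t ≤ rlow ^ t := Real.rpow_le_rpow hrpos.le hlt.le ht
      have h3 : r ^ (-t) * r ^ t = 1 := by rw [← Real.rpow_add hrpos]; simp
      calc (1:ℝ) = r ^ (-t) * r ^ t := h3.symm
        _ ≤ r ^ (-t) * I t :=
            mul_le_mul_of_nonneg_left (h2.trans (hjensen t)) (Real.rpow_pos_of_pos hrpos _).le
    have := h1.trans hr.2
    linarith
  have hrlow_le_rbar : rlow ≤ rbar := by
    rw [hrbar]; exact le_csInf hSne hS_lb
  have hrbar_pos : 0 < rbar := lt_of_lt_of_le hrlow_pos hrlow_le_rbar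
  have hrbar_le : ∀ r ∈ S, rbar ≤ r := by
    intro r hr; rw [hrbar]; exact csInf_le hSbdd hr
  have hbelow : ∀ r : ℝ, 0 < r → r < rbar → 1 / b < ϱ r := by
    intro r h0 hr
    by_contra hle
    push_neg at hle
    exact absurd (hrbar_le r ⟨h0, hle⟩) (not_le.mpr hr)
  -- per-term lower bound at rbar
  have hrbar_term : ∀ t : ℝ, 0 ≤ t → 1 / b ≤ rbar ^ (-t) * I t := by
    intro t ht
    by_contra hcon
    push_neg at hcon
    rcases eq_or_lt_of_le ht with h0 | h0
    · rw [← h0] at hcon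
      rw [neg_zero, Real.rpow_zero, one_mul, hI0] at hcon
      linarith
    · set c := rbar ^ (-t) * I t with hc
      have hcpos : 0 < c := mul_pos (Real.rpow_pos_of_pos hrbar_pos _) (hI_pos t ht)
      set K := (1 / (b:ℝ)) / c with hK
      have hK1 : 1 < K := (one_lt_div hcpos).mpr hcon
      have hKpos : (0:ℝ) < K := lt_trans one_pos hK1
      set θ0 : ℝ := K ^ (-(1/t)) with hθ0
      have hθ0pos : 0 < θ0 := Real.rpow_pos_of_pos hKpos _
      have hθ01 : θ0 < 1 := Real.rpow_lt_one_of_one_lt_of_neg hK1 (by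
        rw [neg_lt_zero]; positivity)
      set θ : ℝ := (θ0 + 1) / 2 with hθ
      have hθpos : 0 < θ := by positivity
      have hθlt1 : θ < 1 := by rw [hθ]; linarith
      have hθgt : θ0 < θ := by rw [hθ]; linarith
      have hr0 : 0 < θ * rbar := mul_pos hθpos hrbar_pos
      have hrlt : θ * rbar < rbar := by
        have h := mul_lt_mul_of_pos_right hθlt1 hrbar_pos
        rwa [one_mul] at h
      have hθbound : θ ^ (-t) < K := by
        have h1 : θ0 ^ (-t) = K := by
          rw [hθ0, ← Real.rpow_mul hKpos.le]
          rw [show -(1/t) * -t = 1 by field_simp]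
          exact Real.rpow_one K
        rw [← h1]
        exact Real.rpow_lt_rpow_of_neg hθ0pos hθgt (by rwa [neg_lt_zero])
      have hterm := hϱ_le (θ * rbar) hr0 t ht
      have hsplit : (θ * rbar) ^ (-t) = θ ^ (-t) * rbar ^ (-t) :=
        Real.mul_rpow hθpos.le hrbar_pos.le
      have hϱlt : ϱ (θ * rbar) < 1 / b := by
        calc ϱ (θ * rbar) ≤ (θ * rbar) ^ (-t) * I t := hterm
          _ = θ ^ (-t) * c := by rw [hsplit, hc, mul_assoc]
          _ < K * c := by
              exact mul_lt_mul_of_pos_right hθbound hcpos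
          _ = 1 / b := by rw [hK]; field_simp
      exact absurd (hrbar_le _ ⟨hr0, hϱlt.le⟩) (not_le.mpr hrlt)
  -- easy upper bound: r ≤ 1 implies r * ϱ r ≤ p
  have heasy : ∀ r : ℝ, 0 < r → r ≤ 1 → r * ϱ r ≤ p := by
    intro r h0 h1
    rw [hp]
    refine le_ciInf ?_
    rintro ⟨t, ht0, ht1⟩
    have h2 := hϱ_le r h0 t ht0
    have h3 : r * (r ^ (-t) * I t) = r ^ (1 - t) * I t := by
      rw [show r * (r ^ (-t) * I t) = (r ^ (1:ℝ) * r ^ (-t)) * I t by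
        rw [Real.rpow_one]; ring, ← Real.rpow_add h0]
      rw [show (1:ℝ) + -t = 1 - t by ring]
    have h4 : r ^ (1 - t) ≤ 1 := Real.rpow_le_one h0.le h1 (by linarith)
    calc r * ϱ r ≤ r * (r ^ (-t) * I t) :=
          mul_le_mul_of_nonneg_left h2 h0.le
      _ = r ^ (1 - t) * I t := h3
      _ ≤ 1 * I t := mul_le_mul_of_nonneg_right h4 (hI_pos t ht0).le
      _ = I t := one_mul _
  -- bddAbove of the image set
  have hIm_bdd : BddAbove ((fun r => r * ϱ r) '' Set.Icc rlow rbar) := by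
    refine ⟨rbar, ?_⟩
    rintro x ⟨r, hr, rfl⟩
    have hrpos : 0 < r := lt_of_lt_of_le hrlow_pos hr.1
    calc r * ϱ r ≤ r * 1 := mul_le_mul_of_nonneg_left (hϱ_le_one r hrpos) hrpos.le
      _ = r := mul_one r
      _ ≤ rbar := hr.2
  have hq_ge_mem : ∀ r : ℝ, r ∈ Set.Icc rlow rbar → r * ϱ r ≤ q := by
    intro r hr
    rw [hq]
    exact le_csSup hIm_bdd ⟨r, hr, rfl⟩
  -- log-moment function
  set φ : ℝ → ℝ := fun u => Real.log (I u) with hφdef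
  set m : ℝ := Real.log p with hmdef
  have hpm : p = Real.exp m := (Real.exp_log hp_pos).symm
  have hφ_lb : ∀ u : ℝ, 0 ≤ u → u ≤ 1 → m ≤ φ u := fun u h0 h1 =>
    Real.log_le_log hp_pos (hp_le u h0 h1)
  have hφ0 : φ 0 = 0 := by rw [hφdef]; simp [hI0]
  have hm_le0 : m ≤ 0 := Real.log_nonpos hp_pos.le hp_le_one
  have hφ_holder : ∀ a b' l : ℝ, 0 ≤ a → 0 ≤ b' → 0 < l → l < 1 →
      φ (l * a + (1 - l) * b') ≤ l * φ a + (1 - l) * φ b' := by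
    intro a b' l ha hb' hl0 hl1
    have harg : 0 ≤ l * a + (1 - l) * b' := by
      have := mul_nonneg hl0.le ha
      have := mul_nonneg (by linarith : (0:ℝ) ≤ 1 - l) hb'
      linarith
    have h := aux_holder (μ := μ) hA hε hbd hint ha hb' hl0 hl1
    have hlog := Real.log_le_log (hI_pos _ harg) h
    rw [Real.log_mul (ne_of_gt (Real.rpow_pos_of_pos (hI_pos a ha) _))
      (ne_of_gt (Real.rpow_pos_of_pos (hI_pos b' hb') _)),
      Real.log_rpow (hI_pos a ha), Real.log_rpow (hI_pos b' hb')] at hlog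
    exact hlog
  have hφ1_ge : m ≤ φ 1 := hφ_lb 1 zero_le_one le_rfl
  have hφ_super : ∀ u : ℝ, 1 ≤ u → u * φ 1 ≤ φ u := by
    intro u hu
    rcases eq_or_lt_of_le hu with h1 | h1
    · rw [← h1]; simp
    · have hupos : (0:ℝ) < u := by linarith
      have hinv1 : 1 / u < 1 := by rw [div_lt_one hupos]; exact h1
      have hinv0 : 0 < 1 / u := by positivity
      have hh := hφ_holder 0 u (1 - 1/u) le_rfl (by linarith) (by linarith) (by linarith)
      have harg : (1 - 1/u) * 0 + (1 - (1 - 1/u)) * u = 1 := by field_simp; ring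
      rw [harg, hφ0, mul_zero, zero_add] at hh
      have hh2 : φ 1 ≤ (1/u) * φ u := by
        have : (1 - (1 - 1/u)) = 1/u := by ring
        rwa [this] at hh
      have := mul_le_mul_of_nonneg_left hh2 hupos.le
      calc u * φ 1 ≤ u * ((1/u) * φ u) := this
        _ = φ u := by field_simp
  -- the slope set B and β
  set B : Set ℝ := {x : ℝ | ∃ u : ℝ, 1 < u ∧ x = (φ u - m) / (u - 1)} with hBdef
  have hBne : B.Nonempty := ⟨(φ 2 - m) / (2 - 1), 2, one_lt_two, rfl⟩
  have hB_lb : ∀ x ∈ B, m ≤ x := by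
    rintro x ⟨u, hu, rfl⟩
    have h1 : u * m ≤ φ u :=
      le_trans (mul_le_mul_of_nonneg_left hφ1_ge (by linarith)) (hφ_super u hu.le)
    rw [le_div_iff₀ (by linarith)]
    have h2 : m * (u - 1) = u * m - m := by ring
    rw [h2]
    linarith
  have hBbdd : BddBelow B := ⟨m, hB_lb⟩
  set β : ℝ := sInf B with hβdef
  have hβ_ge : m ≤ β := le_csInf hBne hB_lb
  set s : ℝ := min β 0 with hsdef
  have hs_le0 : s ≤ 0 := min_le_right _ _
  have hs_ge_m : m ≤ s := le_min hβ_ge hm_le0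
  -- key witness inequality: the line through (1, m) with slope s supports φ
  have hwit : ∀ u : ℝ, 0 ≤ u → m + s * (u - 1) ≤ φ u := by
    intro u hu0
    rcases lt_trichotomy u 1 with hu | hu | hu
    · have hφu : m ≤ φ u := hφ_lb u hu0 hu.le
      rcases le_or_gt 0 β with hβ0 | hβ0
      · have hs0 : s = 0 := by rw [hsdef, min_eq_right hβ0]
        rw [hs0, zero_mul, add_zero]
        exact hφu
      · have hsβ : s = β := by rw [hsdef, min_eq_left hβ0.le]
        have hcross : (m - φ u) / (1 - u) ≤ β := by
          refine le_csInf hBne ?_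
          rintro x ⟨u₂, hu₂, rfl⟩
          rw [div_le_div_iff₀ (by linarith) (by linarith)]
          set l : ℝ := (u₂ - 1) / (u₂ - u) with hldef
          have hu₂u : 0 < u₂ - u := by linarith
          have hl0 : 0 < l := div_pos (by linarith) hu₂u
          have hl1 : l < 1 := by rw [hldef, div_lt_one hu₂u]; linarith
          have harg : l * u + (1 - l) * u₂ = 1 := by
            rw [hldef]; field_simp; ring
          have hh := hφ_holder u u₂ l hu0 (by linarith) hl0 hl1
          rw [harg] at hh
          have h1 : m ≤ l * φ u + (1 - l) * φ u₂ := le_trans hφ1_ge hh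
          have h2 : m * (u₂ - u) ≤ (u₂ - 1) * φ u + (1 - u) * φ u₂ := by
            have h3 := mul_le_mul_of_nonneg_right h1 hu₂u.le
            calc m * (u₂ - u) ≤ (l * φ u + (1 - l) * φ u₂) * (u₂ - u) := h3
              _ = (u₂ - 1) * φ u + (1 - u) * φ u₂ := by
                  rw [hldef]; field_simp; try ring
          have hexp : (m - φ u) * (u₂ - 1) - (φ u₂ - m) * (1 - u)
              = m * (u₂ - u) - ((u₂ - 1) * φ u + (1 - u) * φ u₂) := by ring
          linarith [h2]
        have h3 : m - φ u ≤ β * (1 - u) := by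
          rwa [div_le_iff₀ (by linarith)] at hcross
        have h4 : β * (u - 1) = -(β * (1 - u)) := by ring
        rw [hsβ, h4]
        linarith
    · rw [hu]
      simpa using hφ1_ge
    · have hmem : (φ u - m) / (u - 1) ∈ B := ⟨u, hu, rfl⟩
      have h1 : β ≤ (φ u - m) / (u - 1) := csInf_le hBbdd hmem
      have h2 : s ≤ (φ u - m) / (u - 1) := le_trans (min_le_left _ _) h1
      rw [le_div_iff₀ (by linarith)] at h2
      linarith
  -- multiplicative form of the witness inequality
  have hrs : ∀ t : ℝ, 0 ≤ t → p * Real.exp (-s) ≤ (Real.exp s) ^ (-t) * I t := by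
    intro t ht
    have h1 : Real.exp (m + s * (t - 1)) ≤ I t := by
      calc Real.exp (m + s * (t - 1)) ≤ Real.exp (φ t) := Real.exp_le_exp.mpr (hwit t ht)
        _ = I t := Real.exp_log (hI_pos t ht)
    have h3 : (Real.exp s) ^ (-t) = Real.exp (-(s * t)) := by
      rw [Real.rpow_def_of_pos (Real.exp_pos s), Real.log_exp]
      congr 1
      ring
    rw [h3]
    calc p * Real.exp (-s) = Real.exp (-(s * t)) * Real.exp (m + s * (t - 1)) := by
          rw [hpm, ← Real.exp_add, ← Real.exp_add]
          congr 1
          ring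
      _ ≤ Real.exp (-(s * t)) * I t := mul_le_mul_of_nonneg_left h1 (Real.exp_pos _).le
  -- main claim
  have main1 : 1 / b ≤ p → p ≤ q := by
    intro hbp
    rcases le_or_gt p rlow with hLp | hLp
    · have h1 : rlow ≤ rlow * ϱ rlow := by
        have h := mul_le_mul_of_nonneg_left hϱ_rlow hrlow_pos.le
        rwa [mul_one] at h
      calc p ≤ rlow := hLp
        _ ≤ rlow * ϱ rlow := h1
        _ ≤ q := hq_ge_mem rlow ⟨le_rfl, hrlow_le_rbar⟩
    · by_cases hsr : Real.exp s ≤ rbar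
      · have hps : p ≤ Real.exp s := by
          rw [hpm]
          exact Real.exp_le_exp.mpr hs_ge_m
        have hrlow_le : rlow ≤ Real.exp s := le_trans hLp.le hps
        have hϱs : p * Real.exp (-s) ≤ ϱ (Real.exp s) :=
          hle_ϱ (Real.exp s) (p * Real.exp (-s)) fun t ht => hrs t ht
        have hee : Real.exp s * Real.exp (-s) = 1 := by
          rw [← Real.exp_add]; simp
        have hval : p ≤ Real.exp s * ϱ (Real.exp s) := by
          calc p = p * (Real.exp s * Real.exp (-s)) := by rw [hee, mul_one]
            _ = Real.exp s * (p * Real.exp (-s)) := by ring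
            _ ≤ Real.exp s * ϱ (Real.exp s) :=
                mul_le_mul_of_nonneg_left hϱs (Real.exp_pos s).le
        exact le_trans hval (hq_ge_mem (Real.exp s) ⟨hrlow_le, hsr⟩)
      · exfalso
        push_neg at hsr
        have hsr' : sInf S < Real.exp s := by rw [← hrbar]; exact hsr
        obtain ⟨r₀, hr₀S, hr₀lt⟩ := exists_lt_of_csInf_lt hSne hsr'
        have hr₀pos : 0 < r₀ := hr₀S.1
        have hr₀ϱ : ϱ r₀ ≤ 1 / b := hr₀S.2
        have hstep1 : p * Real.exp (-s) ≤ ϱ r₀ := by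
          refine hle_ϱ r₀ _ fun t ht => ?_
          have h1 : (Real.exp s) ^ (-t) ≤ r₀ ^ (-t) :=
            Real.rpow_le_rpow_of_nonpos hr₀pos hr₀lt.le (neg_nonpos.mpr ht)
          calc p * Real.exp (-s) ≤ (Real.exp s) ^ (-t) * I t := hrs t ht
            _ ≤ r₀ ^ (-t) * I t := mul_le_mul_of_nonneg_right h1 (hI_pos t ht).le
        have hexp_ge1 : 1 ≤ Real.exp (-s) := by
          rw [← Real.exp_zero]
          exact Real.exp_le_exp.mpr (by linarith)
        have hchain : p * Real.exp (-s) ≤ 1 / b := le_trans hstep1 hr₀ϱ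
        have hpb : p = 1 / b := by
          refine le_antisymm ?_ hbp
          have h := mul_le_mul_of_nonneg_left hexp_ge1 hp_pos.le
          rw [mul_one] at h
          exact le_trans h hchain
        have hs0 : s = 0 := by
          have h1 : p * Real.exp (-s) ≤ p := hchain.trans (le_of_eq hpb.symm)
          have h2 : Real.exp (-s) ≤ 1 := (mul_le_iff_le_one_right hp_pos).mp h1
          have h3 : -s ≤ 0 := Real.exp_le_one_iff.mp h2
          linarith
        have hIt : ∀ t : ℝ, 0 ≤ t → p ≤ I t := by
          intro t ht
          have h := hrs t ht
          rw [hs0] at h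
          simpa [Real.one_rpow] using h
        have hr₀1 : r₀ < 1 := by
          rw [hs0, Real.exp_zero] at hr₀lt
          exact hr₀lt
        rcases le_or_gt r₀ rlow with hc | hc
        · have h1 : (1:ℝ) ≤ ϱ r₀ := by
            refine hle_ϱ r₀ 1 fun t ht => ?_
            have h2 : r₀ ^ t ≤ rlow ^ t := Real.rpow_le_rpow hr₀pos.le hc ht
            have h3 : r₀ ^ (-t) * r₀ ^ t = 1 := by rw [← Real.rpow_add hr₀pos]; simp
            calc (1:ℝ) = r₀ ^ (-t) * r₀ ^ t := h3.symm
              _ ≤ r₀ ^ (-t) * I t :=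
                  mul_le_mul_of_nonneg_left (h2.trans (hjensen t))
                    (Real.rpow_pos_of_pos hr₀pos _).le
          have := h1.trans hr₀ϱ
          linarith
        · set ρ : ℝ := rlow / r₀ with hρdef
          have hρpos : 0 < ρ := div_pos hrlow_pos hr₀pos
          have hρlt1 : ρ < 1 := (div_lt_one hr₀pos).mpr hc
          have hlogρ : Real.log ρ < 0 := Real.log_neg hρpos hρlt1
          set T : ℝ := Real.log b / (2 * (-Real.log ρ)) with hTdef
          have hTpos : 0 < T := div_pos (Real.log_pos hb1) (by linarith)
          have hρT : 1 / b < ρ ^ T := by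
            rw [Real.rpow_def_of_pos hρpos]
            have hTl : Real.log ρ * T = -Real.log b / 2 := by
              rw [hTdef]
              field_simp [ne_of_lt hlogρ]
              try ring
            rw [hTl]
            have h1b : (1:ℝ) / b = Real.exp (-Real.log b) := by
              rw [Real.exp_neg, Real.exp_log hbpos, one_div]
            rw [h1b]
            apply Real.exp_lt_exp.mpr
            have := Real.log_pos hb1
            linarith
          have hr₀T : (1:ℝ) < r₀ ^ (-T) :=
            Real.one_lt_rpow_of_pos_of_lt_one_of_neg hr₀pos hr₀1 (neg_lt_zero.mpr hTpos)
          set c : ℝ := min (ρ ^ T) (1 / b * r₀ ^ (-T)) with hcdef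
          have hcb : 1 / b < c := by
            refine lt_min hρT ?_
            have h := mul_lt_mul_of_pos_left hr₀T hbinv_pos
            rwa [mul_one] at h
          have hterm : ∀ t : ℝ, 0 ≤ t → c ≤ r₀ ^ (-t) * I t := by
            intro t ht
            rcases le_or_gt t T with htT | htT
            · have h1 : ρ ^ T ≤ ρ ^ t := Real.rpow_le_rpow_of_exponent_ge hρpos hρlt1.le htT
              have h2 : ρ ^ t ≤ r₀ ^ (-t) * I t := by
                rw [hρdef, Real.div_rpow hrlow_pos.le hr₀pos.le, div_eq_mul_inv,
                  ← Real.rpow_neg hr₀pos.le, mul_comm]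
                exact mul_le_mul_of_nonneg_left (hjensen t)
                  (Real.rpow_pos_of_pos hr₀pos _).le
              exact le_trans (min_le_left _ _) (h1.trans h2)
            · have h1 : r₀ ^ (-T) ≤ r₀ ^ (-t) :=
                Real.rpow_le_rpow_of_exponent_ge hr₀pos hr₀1.le (by linarith)
              have h2 : 1 / b * r₀ ^ (-T) ≤ r₀ ^ (-t) * I t := by
                calc 1 / b * r₀ ^ (-T) ≤ 1 / b * r₀ ^ (-t) :=
                      mul_le_mul_of_nonneg_left h1 hbinv_pos.le
                  _ = r₀ ^ (-t) * p := by rw [hpb]; ring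
                  _ ≤ r₀ ^ (-t) * I t :=
                      mul_le_mul_of_nonneg_left (hIt t ht)
                        (Real.rpow_pos_of_pos hr₀pos _).le
              exact le_trans (min_le_right _ _) h2
          have hcϱ : c ≤ ϱ r₀ := hle_ϱ r₀ c hterm
          have := hcϱ.trans hr₀ϱ
          linarith
  -- assemble the three statements
  refine ⟨main1, fun hlt => lt_of_lt_of_le hlt (main1 hlt.le), fun hpb => ?_⟩
  have hq_ge : 1 / b ≤ q := hpb ▸ main1 (le_of_eq hpb.symm)
  have hϱ1 : ϱ 1 ≤ p := by
    rw [hp]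
    refine le_ciInf ?_
    rintro ⟨t, ht0, ht1⟩
    have h := hϱ_le 1 one_pos t ht0
    simpa [Real.one_rpow] using h
  have h1S : (1:ℝ) ∈ S := ⟨one_pos, by rw [← hpb]; exact hϱ1⟩
  have hrbar1 : rbar ≤ 1 := by rw [hrbar]; exact csInf_le hSbdd h1S
  have hq_le : q ≤ 1 / b := by
    rw [hq]
    refine csSup_le ⟨rlow * ϱ rlow, ⟨rlow, ⟨le_rfl, hrlow_le_rbar⟩, rfl⟩⟩ ?_
    rintro x ⟨r, hr, rfl⟩
    have hrpos : 0 < r := lt_of_lt_of_le hrlow_pos hr.1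
    have h := heasy r hrpos (hr.2.trans hrbar1)
    rw [hpb] at h
    exact h
  linarith
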